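/- The Möbius space Z = {z ∈ ℂ² : |z₁| > |z₂|} with coherent product K(z,z') = (conj(z₁)z₁' − conj(z₂)z₂')^{-1} is slender: any finite set of linearly dependent nonzero coherent states contains two parallel coherent states. Equivalently, if ∑_k c_k/(conj(z_{k1}) w₁ − conj(z_{k2}) w₂) = 0 for all w ∈ Z with not all c_k zero, then two of the points z_k are complex scalar multiples of each other. -/

import Mathlib

open scoped ComplexConjugate
open Polynomial Finset

theorem mobius_space_slender :
    ∀ (n : ℕ) (c : Fin n → ℂ) (zs : Fin n → ℂ × ℂ),
      (∀ i, ‖(zs i).2‖ < ‖(zs i).1‖) →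
      (∀ w : ℂ × ℂ, ‖w.2‖ < ‖w.1‖ →
        ∑ i, c i * (conj (zs i).1 * w.1 - conj (zs i).2 * w.2)⁻¹ = 0) →
      (¬ ∀ i, c i = 0) →
      ∃ i j : Fin n, i ≠ j ∧ ∃ t : ℂ, zs j = t • zs i := by
  intro n c zs hz hsum hc
  by_contra hpar
  push_neg at hpar hc
  obtain ⟨k, hck⟩ := hc
  set a : Fin n → ℂ := fun i => conj (zs i).1 with ha
  set b : Fin n → ℂ := fun i => conj (zs i).2 with hb
  have habs : ∀ i, ‖b i‖ < ‖a i‖ := by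
    intro i
    simpa [ha, hb, Complex.norm_conj] using hz i
  have ha0 : ∀ i, a i ≠ 0 := by
    intro i h
    have h1 := habs i
    rw [h, norm_zero] at h1
    exact (norm_nonneg _).not_gt h1
  set r : Fin n → ℂ := fun i => b i / a i with hr
  have hrinj : Function.Injective r := by
    intro i j hij
    by_contra hne
    have h : b i / a i = b j / a j := hij
    rw [div_eq_div_iff (ha0 i) (ha0 j)] at h
    refine hpar i j hne (conj (a j / a i)) ?_
    have e1 : (zs j).1 = conj (a j / a i) * (zs i).1 := by
      apply (starRingEnd ℂ).injective
      rw [map_mul, Complex.conj_conj]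
      show a j = a j / a i * a i
      rw [div_mul_cancel₀ _ (ha0 i)]
    have e2 : (zs j).2 = conj (a j / a i) * (zs i).2 := by
      apply (starRingEnd ℂ).injective
      rw [map_mul, Complex.conj_conj]
      show b j = a j / a i * b i
      rw [div_mul_eq_mul_div, eq_div_iff (ha0 i)]
      linear_combination -h
    refine Prod.ext ?_ ?_
    · simpa [Prod.smul_fst, smul_eq_mul] using e1
    · simpa [Prod.smul_snd, smul_eq_mul] using e2
  have h0 : ∀ u : ℂ, ‖u‖ < 1 → ∑ i, c i * (a i - b i * u)⁻¹ = 0 := by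
    intro u hu
    have := hsum (1, u) (by simpa using hu)
    simpa [ha, hb] using this
  have hne : ∀ (u : ℂ), ‖u‖ < 1 → ∀ i, a i - b i * u ≠ 0 := by
    intro u hu i h
    have h1 : ‖b i * u‖ < ‖a i‖ := by
      rw [norm_mul]
      calc ‖b i‖ * ‖u‖ ≤ ‖b i‖ * 1 :=
            mul_le_mul_of_nonneg_left hu.le (by positivity)
        _ = ‖b i‖ := mul_one _
        _ < ‖a i‖ := habs i
    rw [sub_eq_zero] at h
    rw [← h] at h1
    exact lt_irrefl _ h1
  set P : Polynomial ℂ :=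
    ∑ i, Polynomial.C (c i / a i) * ∏ j ∈ univ.erase i, (1 - Polynomial.C (r j) * Polynomial.X)
    with hP
  have hPeval : ∀ u : ℂ, P.eval u =
      ∑ i, (c i / a i) * ∏ j ∈ univ.erase i, (1 - r j * u) := by
    intro u
    rw [hP]
    simp [Polynomial.eval_finset_sum, Polynomial.eval_prod]
  have hProot : ∀ u : ℂ, ‖u‖ < 1 → P.eval u = 0 := by
    intro u hu
    have key : P.eval u = (∑ i, c i * (a i - b i * u)⁻¹) * ∏ j, (1 - r j * u) := by
      rw [hPeval, Finset.sum_mul]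
      refine Finset.sum_congr rfl fun i _ => ?_
      symm
      rw [← Finset.prod_erase_mul _ _ (Finset.mem_univ i)]
      have h2 : (1 : ℂ) - r i * u = (a i - b i * u) / a i := by
        rw [sub_div, div_self (ha0 i), hr]
        ring
      rw [h2]
      calc c i * (a i - b i * u)⁻¹ *
            ((∏ j ∈ univ.erase i, (1 - r j * u)) * ((a i - b i * u) / a i))
          = ((a i - b i * u)⁻¹ * (a i - b i * u)) *
            (c i / a i * ∏ j ∈ univ.erase i, (1 - r j * u)) := by ring
        _ = c i / a i * ∏ j ∈ univ.erase i, (1 - r j * u) := by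
            rw [inv_mul_cancel₀ (hne u hu i), one_mul]
    rw [key, h0 u hu, zero_mul]
  have hP0 : P = 0 := by
    refine Polynomial.eq_zero_of_infinite_isRoot P ?_
    have hinf : Set.Infinite (Set.range (fun m : ℕ => (1 : ℂ) / (m + 2))) := by
      apply Set.infinite_range_of_injective
      intro m m' hmm
      simp only [one_div] at hmm
      have h1 := inv_injective hmm
      have h2 : (m : ℂ) = m' := by linear_combination h1
      exact_mod_cast h2
    refine hinf.mono ?_
    rintro x ⟨m, rfl⟩
    have hm : ‖(1 : ℂ) / (m + 2)‖ < 1 := by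
      have hcast : ((m : ℂ) + 2) = ((m + 2 : ℕ) : ℂ) := by push_cast; ring
      rw [norm_div, norm_one, hcast, Complex.norm_natCast]
      rw [div_lt_one (by positivity)]
      exact_mod_cast Nat.lt_of_sub_eq_succ rfl
    exact hProot _ hm
  have hczero : ∀ i, r i ≠ 0 → c i = 0 := by
    intro i hri
    have h1 := hPeval (r i)⁻¹
    rw [hP0] at h1
    simp only [Polynomial.eval_zero] at h1
    rw [Finset.sum_eq_single i] at h1
    · have hprod : ∏ j ∈ univ.erase i, (1 - r j * (r i)⁻¹) ≠ 0 := by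
        apply Finset.prod_ne_zero_iff.2
        intro j hj
        rw [sub_ne_zero]
        intro h
        have h' : r j = r i := by
          field_simp at h
          first
          | exact h
          | exact h.symm
        exact (Finset.mem_erase.1 hj).1 (hrinj h')
      have h2 := (mul_eq_zero.1 h1.symm).resolve_right hprod
      exact (div_eq_zero_iff.1 h2).resolve_right (ha0 i)
    · intro l _ hli
      apply mul_eq_zero_of_right
      apply Finset.prod_eq_zero (Finset.mem_erase.2 ⟨Ne.symm hli, Finset.mem_univ i⟩)
      rw [mul_inv_cancel₀ hri, sub_self]
    · intro h; exact absurd (Finset.mem_univ i) h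
  have hrk : r k = 0 := by
    by_contra h
    exact hck (hczero k h)
  have h00 := h0 0 (by norm_num)
  rw [Finset.sum_eq_single k] at h00
  · simp only [mul_zero, sub_zero] at h00
    exact hck ((mul_eq_zero.1 h00).resolve_right (inv_ne_zero (ha0 k)))
  · intro j _ hjk
    have hrj : r j ≠ 0 := fun h => hjk (hrinj (h.trans hrk.symm))
    rw [hczero j hrj, zero_mul]
  · intro h; exact absurd (Finset.mem_univ k) h
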